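/- Let λ₁, …, λₙ be negative real numbers. Then the Cauchy-type matrix Ψ with entries Ψ_{ij} = −1/(λ_i + λ_j) is symmetric positive definite, provided the λ_i are distinct. -/

import Mathlib

open Matrix MeasureTheory Set Real Filter

lemma exp_mul_integrableOn {c : ℝ} (hc : c < 0) :
    IntegrableOn (fun t => Real.exp (c * t)) (Set.Ioi 0) := by
  have h := exp_neg_integrableOn_Ioi 0 (b := -c) (by linarith)
  simpa [neg_mul, neg_neg] using h

lemma exp_mul_integral {c : ℝ} (hc : c < 0) :
    ∫ t in Set.Ioi (0:ℝ), Real.exp (c * t) = -1 / c := by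
  have hc0 : c ≠ 0 := ne_of_lt hc
  have hderiv : ∀ x ∈ Set.Ioi (0:ℝ),
      HasDerivAt (fun t => Real.exp (c * t) / c) (Real.exp (c * x)) x := by
    intro x _
    have h1 : HasDerivAt (fun t : ℝ => c * t) c x := by
      simpa using (hasDerivAt_id x).const_mul c
    have h2 := (Real.hasDerivAt_exp (c * x)).comp x h1
    have h3 := h2.div_const c
    rw [mul_div_cancel_right₀ _ hc0] at h3
    exact h3
  have htend : Tendsto (fun t => Real.exp (c * t) / c) atTop (nhds 0) := by
    have h1 : Tendsto (fun t : ℝ => c * t) atTop atBot := by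
      exact tendsto_id.const_mul_atTop_of_neg hc
    have h2 : Tendsto (fun t => Real.exp (c * t)) atTop (nhds 0) :=
      Real.tendsto_exp_atBot.comp h1
    simpa using h2.div_const c
  have hcont : ContinuousWithinAt (fun t => Real.exp (c * t) / c) (Set.Ici 0) 0 :=
    (Continuous.continuousWithinAt (by fun_prop))
  have := integral_Ioi_of_hasDerivAt_of_tendsto hcont hderiv (exp_mul_integrableOn hc) htend
  rw [this]
  simp
  field_simp

theorem cauchy_matrix_posdef
    (n : ℕ) (l : Fin n → ℝ)
    (hneg : ∀ i, l i < 0) (hinj : Function.Injective l) :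
    (Matrix.of fun i j : Fin n => -1 / (l i + l j)).IsSymm ∧
      ∀ x : Fin n → ℝ, x ≠ 0 →
        0 < x ⬝ᵥ (Matrix.of fun i j : Fin n => -1 / (l i + l j)) *ᵥ x := by
  constructor
  · ext i j
    simp [Matrix.IsSymm, add_comm]
  intro x hx
  set f : ℝ → ℝ := fun t => ∑ i, x i * Real.exp (l i * t) with hf
  set g : ℝ → ℝ := fun t => (f t) ^ 2 with hg
  have hsum : ∀ i j : Fin n, l i + l j < 0 := fun i j => by
    have := hneg i; have := hneg j; linarith
  -- pointwise expansion
  have hgexp : ∀ t : ℝ, g t = ∑ i, ∑ j, (x i * x j) * Real.exp ((l i + l j) * t) := by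
    intro t
    simp only [hg, hf, sq, Finset.sum_mul_sum]
    refine Finset.sum_congr rfl fun i _ => Finset.sum_congr rfl fun j _ => ?_
    rw [add_mul, Real.exp_add]; ring
  -- integrability
  have hint : ∀ i j : Fin n, IntegrableOn
      (fun t => (x i * x j) * Real.exp ((l i + l j) * t)) (Set.Ioi 0) :=
    fun i j => (exp_mul_integrableOn (hsum i j)).const_mul _
  have hgint : IntegrableOn g (Set.Ioi 0) := by
    have : g = fun t => ∑ i, ∑ j, (x i * x j) * Real.exp ((l i + l j) * t) :=
      funext hgexp
    rw [this]
    exact integrable_finset_sum _ fun i _ => integrable_finset_sum _ fun j _ => hint i j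
  -- integral value
  have hintval : ∫ t in Set.Ioi (0:ℝ), g t
      = ∑ i, ∑ j, (x i * x j) * (-1 / (l i + l j)) := by
    rw [show (fun t => g t) = fun t => ∑ i, ∑ j, (x i * x j) * Real.exp ((l i + l j) * t)
      from funext hgexp]
    rw [integral_finset_sum _ fun i _ => integrable_finset_sum _ fun j _ => hint i j]
    refine Finset.sum_congr rfl fun i _ => ?_
    rw [integral_finset_sum _ fun j _ => hint i j]
    refine Finset.sum_congr rfl fun j _ => ?_
    rw [MeasureTheory.integral_const_mul, exp_mul_integral (hsum i j)]
  -- quadratic form equals integral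
  have hquad : x ⬝ᵥ (Matrix.of fun i j : Fin n => -1 / (l i + l j)) *ᵥ x
      = ∫ t in Set.Ioi (0:ℝ), g t := by
    rw [hintval]
    simp only [dotProduct, Matrix.mulVec, Matrix.of_apply, dotProduct]
    rw [Finset.sum_comm]
    refine Finset.sum_congr rfl fun i _ => ?_
    rw [Finset.mul_sum]
    refine Finset.sum_congr rfl fun j _ => ?_
    ring
  rw [hquad]
  -- f is eventually nonzero: pick i maximizing l on the support of x
  have hS : (Finset.univ.filter fun i => x i ≠ 0).Nonempty := by
    rcases Function.ne_iff.mp hx with ⟨i, hi⟩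
    exact ⟨i, by simpa using hi⟩
  obtain ⟨i, hiS, hmax⟩ := Finset.exists_max_image _ l hS
  have hxi : x i ≠ 0 := (Finset.mem_filter.mp hiS).2
  have htend : Tendsto (fun t => ∑ j, x j * Real.exp ((l j - l i) * t)) atTop
      (nhds (x i)) := by
    have : (x i : ℝ) = ∑ j, if j = i then x i else 0 := by simp
    rw [this]
    refine tendsto_finset_sum _ fun j _ => ?_
    by_cases hj : j = i
    · subst hj; simp
    · simp only [if_neg hj]
      by_cases hxj : x j = 0
      · simp [hxj]
      · have hji : l j < l i := by
          have h1 : l j ≤ l i := hmax j (by simp [hxj])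
          exact lt_of_le_of_ne h1 fun h => hj (hinj h)
        have h1 : Tendsto (fun t : ℝ => (l j - l i) * t) atTop atBot :=
          tendsto_id.const_mul_atTop_of_neg (by linarith)
        have h2 : Tendsto (fun t => Real.exp ((l j - l i) * t)) atTop (nhds 0) :=
          Real.tendsto_exp_atBot.comp h1
        simpa using h2.const_mul (x j)
  have hev : ∀ᶠ t in atTop, f t ≠ 0 := by
    have hne : ∀ᶠ t in atTop, (∑ j, x j * Real.exp ((l j - l i) * t)) ≠ 0 :=
      htend.eventually_ne hxi
    filter_upwards [hne] with t ht hft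
    apply ht
    have : (∑ j, x j * Real.exp ((l j - l i) * t))
        = f t * Real.exp (-(l i) * t) := by
      rw [hf, Finset.sum_mul]
      refine Finset.sum_congr rfl fun j _ => ?_
      rw [mul_assoc, ← Real.exp_add]
      ring_nf
    rw [this, hft, zero_mul]
  obtain ⟨t0, ht0pos, ht0⟩ : ∃ t0 : ℝ, 0 < t0 ∧ f t0 ≠ 0 := by
    rcases (hev.and (eventually_gt_atTop 0)).exists with ⟨t0, h1, h2⟩
    exact ⟨t0, h2, h1⟩
  have hfc : Continuous f := by
    rw [hf]; fun_prop
  have hgc : Continuous g := by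
    rw [hg]; exact hfc.pow 2
  have hgopen : IsOpen (Function.support g) := by
    have : Function.support g = g ⁻¹' {0}ᶜ := by
      ext t; simp [Function.mem_support]
    rw [this]
    exact (isOpen_compl_singleton).preimage hgc
  have hsupp : 0 < volume (Function.support g ∩ Set.Ioi 0) := by
    refine (hgopen.inter isOpen_Ioi).measure_pos volume ⟨t0, ?_, ht0pos⟩
    simp only [Function.mem_support, hg]
    exact pow_ne_zero 2 ht0
  rw [setIntegral_pos_iff_support_of_nonneg_ae ?_ hgint]
  · exact hsupp
  · filter_upwards with t
    exact sq_nonneg (f t)
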